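/- For every n > 2 and every φ in the open probability simplex, the Markov chain with transition matrix P is ergodic in the sense that its m-step transition probabilities converge to the stationary distribution independently of the starting state: for all states i and j, the sequence (P^m) i j tends to π j as m → ∞, where π j = φ j * (1 - φ j) / (∑ k, φ k * (1 - φ k)). -/

import Mathlib

open Filter

lemma tf_osc_step {n : ℕ} (Q : Matrix (Fin n) (Fin n) ℝ) (δ : ℝ)
    (hQ : ∀ i k, δ ≤ Q i k) (hrow : ∀ i, ∑ k, Q i k = 1) (f : Fin n → ℝ) (M m' : ℝ)
    (hub : ∀ k, f k ≤ M) (hlb : ∀ k, m' ≤ f k) (i i' : Fin n) :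
    Q.mulVec f i - Q.mulVec f i' ≤ (1 - n * δ) * (M - m') := by
  have hmv : ∀ a, Q.mulVec f a = ∑ k, Q a k * f k := by
    intro a; simp [Matrix.mulVec, dotProduct]
  have hsum : ∀ a, ∑ k, (Q a k - δ) = 1 - n * δ := by
    intro a
    rw [Finset.sum_sub_distrib, hrow, Finset.sum_const]
    simp [mul_comm]
  have hub' : ∑ k, (Q i k - δ) * f k ≤ (1 - n * δ) * M := by
    calc ∑ k, (Q i k - δ) * f k ≤ ∑ k, (Q i k - δ) * M := by
          apply Finset.sum_le_sum
          intro k _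
          exact mul_le_mul_of_nonneg_left (hub k) (by linarith [hQ i k])
      _ = (1 - n * δ) * M := by rw [← Finset.sum_mul, hsum]
  have hlb' : (1 - n * δ) * m' ≤ ∑ k, (Q i' k - δ) * f k := by
    calc (1 - n * δ) * m' = ∑ k, (Q i' k - δ) * m' := by rw [← Finset.sum_mul, hsum]
      _ ≤ ∑ k, (Q i' k - δ) * f k := by
          apply Finset.sum_le_sum
          intro k _
          exact mul_le_mul_of_nonneg_left (hlb k) (by linarith [hQ i' k])
  have key : Q.mulVec f i - Q.mulVec f i'
      = (∑ k, (Q i k - δ) * f k) - ∑ k, (Q i' k - δ) * f k := by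
    rw [hmv, hmv]
    simp only [sub_mul]
    rw [Finset.sum_sub_distrib, Finset.sum_sub_distrib]
    ring
  rw [key]
  nlinarith [hub', hlb']

/-- Theorem 1 of the TribeFlow paper (ergodicity): the `m`-step transition probabilities
of the chain with transition matrix `P` converge to the stationary distribution `π`
independently of the starting state. -/
theorem tribeflow_ergodic (n : ℕ) (hn : 2 < n) (φ : Fin n → ℝ)
    (hφpos : ∀ i, 0 < φ i) (hφsum : ∑ i, φ i = 1)
    (P : Matrix (Fin n) (Fin n) ℝ)
    (hP : ∀ i j, P i j = if i = j then 0 else φ j / (1 - φ i))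
    (π : Fin n → ℝ)
    (hπ : ∀ i, π i = φ i * (1 - φ i) / (∑ k, φ k * (1 - φ k))) :
    ∀ i j, Tendsto (fun m : ℕ => (P ^ m) i j) atTop (nhds (π j)) := by
  haveI : NeZero n := ⟨by omega⟩
  have hne : (Finset.univ : Finset (Fin n)).Nonempty := Finset.univ_nonempty
  -- φ i < 1
  have hφlt : ∀ i, φ i < 1 := by
    intro i
    have h2 : ∃ l : Fin n, l ≠ i := by
      rcases Finset.exists_mem_ne (by rw [Finset.card_univ, Fintype.card_fin]; omega) i with ⟨l, _, hl⟩
      exact ⟨l, hl⟩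
    rcases h2 with ⟨l, hl⟩
    have : φ i + ∑ k ∈ Finset.univ.erase i, φ k = 1 := by
      rw [Finset.add_sum_erase _ _ (Finset.mem_univ i)]; exact hφsum
    have hpos : 0 < ∑ k ∈ Finset.univ.erase i, φ k := by
      apply Finset.sum_pos (fun k _ => hφpos k)
      exact ⟨l, Finset.mem_erase.2 ⟨hl, Finset.mem_univ l⟩⟩
    linarith
  have honesub : ∀ i, 0 < 1 - φ i := fun i => by linarith [hφlt i]
  -- P nonneg
  have hPnn : ∀ i k, 0 ≤ P i k := by
    intro i k
    rw [hP]
    split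
    · exact le_refl 0
    · exact le_of_lt (div_pos (hφpos k) (honesub i))
  -- P row stochastic
  have hProw : ∀ i, ∑ k, P i k = 1 := by
    intro i
    have : ∑ k, P i k = ∑ k ∈ Finset.univ.erase i, φ k / (1 - φ i) := by
      have h0 : P i i = 0 := by rw [hP]; simp
      rw [← Finset.add_sum_erase _ (fun k => P i k) (Finset.mem_univ i), h0, zero_add]
      apply Finset.sum_congr rfl
      intro k hk
      rw [hP]
      rw [if_neg (Ne.symm (Finset.mem_erase.1 hk).1)]
    rw [this, ← Finset.sum_div]
    have herase : ∑ k ∈ Finset.univ.erase i, φ k = 1 - φ i := by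
      have := Finset.add_sum_erase Finset.univ φ (Finset.mem_univ i)
      rw [hφsum] at this
      linarith
    rw [herase, div_self (ne_of_gt (honesub i))]
  -- P^2 row stochastic and entries positive
  have hsqrow : ∀ i, ∑ k, (P ^ 2) i k = 1 := by
    intro i
    have h2 : (P ^ 2) = P * P := sq P
    simp only [h2, Matrix.mul_apply]
    rw [Finset.sum_comm]
    calc ∑ l, ∑ k, P i l * P l k = ∑ l, P i l * ∑ k, P l k := by
          simp [Finset.mul_sum]
      _ = 1 := by simp [hProw]
  have hsqpos : ∀ i k, 0 < (P ^ 2) i k := by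
    intro i k
    have h2 : (P ^ 2) = P * P := sq P
    rw [h2, Matrix.mul_apply]
    have hex : ∃ l : Fin n, l ≠ i ∧ l ≠ k := by
      have hcard : (({i, k} : Finset (Fin n))).card ≤ 2 :=
        (Finset.card_insert_le _ _).trans (by simp)
      have hne2 : (Finset.univ \ ({i, k} : Finset (Fin n))).Nonempty := by
        rw [← Finset.card_pos, Finset.card_sdiff_of_subset (Finset.subset_univ _)]
        have : (Finset.univ : Finset (Fin n)).card = n := by simp
        omega
      rcases hne2 with ⟨l, hl⟩
      rw [Finset.mem_sdiff] at hl
      have := hl.2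
      simp only [Finset.mem_insert, Finset.mem_singleton, not_or] at this
      exact ⟨l, this.1, this.2⟩
    rcases hex with ⟨l, hli, hlk⟩
    have hterm : 0 < P i l * P l k := by
      apply mul_pos
      · rw [hP, if_neg (fun h => hli h.symm)]
        exact div_pos (hφpos l) (honesub i)
      · rw [hP, if_neg hlk]
        exact div_pos (hφpos k) (honesub l)
    exact Finset.sum_pos' (fun x _ => mul_nonneg (hPnn i x) (hPnn x k)) ⟨l, Finset.mem_univ l, hterm⟩
  -- stationary distribution facts
  set S := ∑ k, φ k * (1 - φ k) with hS
  have hSpos : 0 < S := by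
    apply Finset.sum_pos (fun k _ => mul_pos (hφpos k) (honesub k)) hne
  have hπnn : ∀ k, 0 ≤ π k := by
    intro k
    rw [hπ]
    exact le_of_lt (div_pos (mul_pos (hφpos k) (honesub k)) hSpos)
  have hπsum : ∑ k, π k = 1 := by
    have h1 : ∑ k, π k = (∑ k, φ k * (1 - φ k)) / S := by
      rw [Finset.sum_div]
      exact Finset.sum_congr rfl (fun k _ => hπ k)
    rw [h1, ← hS, div_self (ne_of_gt hSpos)]
  have hstat : ∀ j, ∑ k, π k * P k j = π j := by
    intro j
    have hterm : ∀ k, π k * P k j = if k = j then 0 else φ k * φ j / S := by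
      intro k
      rw [hπ, hP]
      split
      · simp
      · have hx : (1 : ℝ) - φ k ≠ 0 := ne_of_gt (honesub k)
        field_simp
    have hsum2 : ∑ k, π k * P k j = ∑ k ∈ Finset.univ.erase j, φ k * φ j / S := by
      rw [← Finset.add_sum_erase _ (fun k => π k * P k j) (Finset.mem_univ j)]
      rw [hterm j, if_pos rfl, zero_add]
      apply Finset.sum_congr rfl
      intro k hk
      rw [hterm k, if_neg (Finset.mem_erase.1 hk).1]
    have herase : ∑ k ∈ Finset.univ.erase j, φ k = 1 - φ j := by
      have := Finset.add_sum_erase Finset.univ φ (Finset.mem_univ j)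
      rw [hφsum] at this
      linarith
    rw [hsum2, hπ]
    calc ∑ k ∈ Finset.univ.erase j, φ k * φ j / S
        = (∑ k ∈ Finset.univ.erase j, φ k) * φ j / S := by
          rw [← Finset.sum_div, ← Finset.sum_mul]
      _ = φ j * (1 - φ j) / S := by rw [herase]; ring
  -- main argument
  intro i j
  set F : ℕ → Fin n → ℝ := fun m k => (P ^ m) k j with hF
  have hstatm : ∀ m, ∑ k, π k * F m k = π j := by
    intro m
    induction m with
    | zero =>
        simp only [hF, pow_zero, Matrix.one_apply]
        simp [Finset.sum_ite_eq', mul_ite]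
    | succ m ih =>
        have hrec : ∀ k, F (m + 1) k = ∑ l, P k l * F m l := by
          intro k
          show (P ^ (m + 1)) k j = _
          rw [pow_succ', Matrix.mul_apply]
        calc ∑ k, π k * F (m + 1) k = ∑ k, ∑ l, π k * (P k l * F m l) := by
              apply Finset.sum_congr rfl
              intro k _
              rw [hrec k, Finset.mul_sum]
          _ = ∑ l, ∑ k, π k * (P k l * F m l) := Finset.sum_comm
          _ = ∑ l, (∑ k, π k * P k l) * F m l := by
              apply Finset.sum_congr rfl
              intro l _
              rw [Finset.sum_mul]
              apply Finset.sum_congr rfl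
              intro k _
              ring
          _ = ∑ l, π l * F m l := by
              apply Finset.sum_congr rfl
              intro l _
              rw [hstat l]
          _ = π j := ih
  set Mx : ℕ → ℝ := fun m => Finset.univ.sup' hne (F m) with hMx
  set mn : ℕ → ℝ := fun m => Finset.univ.inf' hne (F m) with hmn
  have hle : ∀ m k, F m k ≤ Mx m := fun m k => Finset.le_sup' _ (Finset.mem_univ k)
  have hge : ∀ m k, mn m ≤ F m k := fun m k => Finset.inf'_le _ (Finset.mem_univ k)
  have hosc0 : Mx 0 - mn 0 ≤ 1 := by
    have h1 : Mx 0 ≤ 1 := by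
      apply Finset.sup'_le
      intro k _
      show (P ^ 0) k j ≤ 1
      rw [pow_zero, Matrix.one_apply]
      split <;> norm_num
    have h2 : (0 : ℝ) ≤ mn 0 := by
      apply Finset.le_inf'
      intro k _
      show (0 : ℝ) ≤ (P ^ 0) k j
      rw [pow_zero, Matrix.one_apply]
      split <;> norm_num
    linarith
  -- one-step monotonicity of oscillation
  have hmf1 : ∀ m, F (m + 1) = P.mulVec (F m) := by
    intro m
    funext k
    show (P ^ (m + 1)) k j = _
    rw [pow_succ', Matrix.mul_apply]
    simp [Matrix.mulVec, dotProduct, hF]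
  have hstepmono : ∀ m, Mx (m + 1) - mn (m + 1) ≤ Mx m - mn m := by
    intro m
    obtain ⟨a, _, ha⟩ := Finset.exists_mem_eq_sup' hne (F (m + 1))
    obtain ⟨b, _, hb⟩ := Finset.exists_mem_eq_inf' hne (F (m + 1))
    have := tf_osc_step P 0 (fun x y => hPnn x y) hProw (F m) (Mx m) (mn m)
      (hle m) (hge m) a b
    rw [← hmf1 m] at this
    have hMa : Mx (m + 1) = F (m + 1) a := ha
    have hmb : mn (m + 1) = F (m + 1) b := hb
    rw [hMa, hmb]
    simpa using this
  have hmono : ∀ a b, Mx (a + b) - mn (a + b) ≤ Mx a - mn a := by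
    intro a b
    induction b with
    | zero => exact le_refl _
    | succ b ih => exact le_trans (hstepmono (a + b)) ih
  -- two-step contraction
  have hneP : (Finset.univ : Finset (Fin n × Fin n)).Nonempty := Finset.univ_nonempty
  set δ := Finset.univ.inf' hneP (fun p : Fin n × Fin n => (P ^ 2) p.1 p.2) with hδ
  have hδpos : 0 < δ := by
    rw [hδ, Finset.lt_inf'_iff]
    exact fun p _ => hsqpos p.1 p.2
  have hδle : ∀ a b, δ ≤ (P ^ 2) a b := fun a b =>
    Finset.inf'_le _ (Finset.mem_univ (a, b))
  set θ := 1 - (n : ℝ) * δ with hθ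
  have hnδ : (n : ℝ) * δ ≤ 1 := by
    have k0 : Fin n := ⟨0, by omega⟩
    calc (n : ℝ) * δ = ∑ _k : Fin n, δ := by simp [mul_comm]
      _ ≤ ∑ k, (P ^ 2) k0 k := Finset.sum_le_sum (fun k _ => hδle k0 k)
      _ = 1 := hsqrow k0
  have hθnn : 0 ≤ θ := by rw [hθ]; linarith
  have hθlt : θ < 1 := by
    rw [hθ]
    have : 0 < (n : ℝ) * δ := mul_pos (by positivity) hδpos
    linarith
  have hmf2 : ∀ m, F (m + 2) = (P ^ 2).mulVec (F m) := by
    intro m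
    funext k
    show (P ^ (m + 2)) k j = _
    have h2 : P ^ (m + 2) = P ^ 2 * P ^ m := by
      rw [← pow_add, Nat.add_comm]
    rw [h2, Matrix.mul_apply]
    simp [Matrix.mulVec, dotProduct, hF]
  have hstep2 : ∀ m, Mx (m + 2) - mn (m + 2) ≤ θ * (Mx m - mn m) := by
    intro m
    obtain ⟨a, _, ha⟩ := Finset.exists_mem_eq_sup' hne (F (m + 2))
    obtain ⟨b, _, hb⟩ := Finset.exists_mem_eq_inf' hne (F (m + 2))
    have := tf_osc_step (P ^ 2) δ hδle hsqrow (F m) (Mx m) (mn m)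
      (hle m) (hge m) a b
    rw [← hmf2 m] at this
    have hMa : Mx (m + 2) = F (m + 2) a := ha
    have hmb : mn (m + 2) = F (m + 2) b := hb
    rw [hMa, hmb, hθ]
    exact this
  have hgeo : ∀ t, Mx (2 * t) - mn (2 * t) ≤ θ ^ t := by
    intro t
    induction t with
    | zero => simpa using hosc0
    | succ t ih =>
        have h1 : 2 * (t + 1) = 2 * t + 2 := by ring
        rw [h1, pow_succ]
        calc Mx (2 * t + 2) - mn (2 * t + 2) ≤ θ * (Mx (2 * t) - mn (2 * t)) :=
              hstep2 (2 * t)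
          _ ≤ θ * θ ^ t := mul_le_mul_of_nonneg_left ih hθnn
          _ = θ ^ t * θ := mul_comm _ _
  have hbound : ∀ m k, |F m k - π j| ≤ Mx m - mn m := by
    intro m k
    have h1 : F m k - π j = ∑ l, π l * (F m k - F m l) := by
      have h2 : ∑ l, π l * (F m k - F m l)
          = (∑ l, π l) * F m k - ∑ l, π l * F m l := by
        rw [Finset.sum_mul, ← Finset.sum_sub_distrib]
        apply Finset.sum_congr rfl
        intro l _
        ring
      rw [h2, hπsum, hstatm m, one_mul]
    rw [h1]
    calc |∑ l, π l * (F m k - F m l)| ≤ ∑ l, |π l * (F m k - F m l)| :=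
          Finset.abs_sum_le_sum_abs _ _
      _ ≤ ∑ l, π l * (Mx m - mn m) := by
          apply Finset.sum_le_sum
          intro l _
          rw [abs_mul, abs_of_nonneg (hπnn l)]
          apply mul_le_mul_of_nonneg_left _ (hπnn l)
          rw [abs_le]
          constructor
          · linarith [hle m l, hge m k]
          · linarith [hle m k, hge m l]
      _ = Mx m - mn m := by rw [← Finset.sum_mul, hπsum, one_mul]
  have hfinal : ∀ m, |F m i - π j| ≤ θ ^ (m / 2) := by
    intro m
    have hmono' := hmono (2 * (m / 2)) (m % 2)
    rw [Nat.div_add_mod m 2] at hmono'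
    calc |F m i - π j| ≤ Mx m - mn m := hbound m i
      _ ≤ Mx (2 * (m / 2)) - mn (2 * (m / 2)) := hmono'
      _ ≤ θ ^ (m / 2) := hgeo (m / 2)
  have htend : Tendsto (fun m : ℕ => θ ^ (m / 2)) atTop (nhds 0) := by
    apply Tendsto.comp (tendsto_pow_atTop_nhds_zero_of_lt_one hθnn hθlt)
    apply Filter.tendsto_atTop_atTop.2
    intro b
    exact ⟨2 * b, fun a ha => (Nat.le_div_iff_mul_le (by norm_num)).2 (by omega)⟩
  have h0 : Tendsto (fun m : ℕ => F m i - π j) atTop (nhds 0) := by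
    apply squeeze_zero_norm _ htend
    intro m
    simpa [Real.norm_eq_abs] using hfinal m
  have h1 := h0.add_const (π j)
  simpa using h1
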